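/- Let V be a nontrivial real vector space, W := V × V* with η((X,ξ),(Y,ζ)) := (ξ(Y)+ζ(X))/2. Let α, ω : V ≃ V* be skew linear equivalences, let ρ : V → V be linear with ρ∘ρ = −s•id_V for some s ∈ {−1,1}, and let ε₂, ε₃ ∈ {−1,1}. Define linear endomorphisms of W by 𝕁_ρ(X,ξ) := (ρX, −ξ∘ρ), 𝕁_α(X,ξ) := (α⁻¹ξ, ε₂•αX), and 𝕁_Ω(X,ξ) := (ω⁻¹ξ, ε₃•ωX). Assume 𝕁_ρ, 𝕁_α, 𝕁_Ω pairwise anticommute. Then for all a₁,a₂,a₃ ∈ ℝ, the operator 𝔸 := a₁•𝕁_ρ + a₂•𝕁_α + a₃•𝕁_Ω satisfies 𝔸∘𝔸 = k•id_W and η(𝔸x,𝔸y) = −k•η(x,y) for all x,y ∈ W, where k := −s·a₁² + ε₂·a₂² + ε₃·a₃²; consequently 𝔸 is a generalized almost structure if and only if |k| = 1. -/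

import Mathlib

/-- quadrics of generalized almost structures from a non-degenerate
Monge–Ampère structure (core of Proposition 3.11). -/
theorem statement_0 (V : Type*) [AddCommGroup V] [Module ℝ V] [Nontrivial V]
    (α ω : V ≃ₗ[ℝ] Module.Dual ℝ V)
    (hα : ∀ X Y : V, α X Y = - α Y X) (hω : ∀ X Y : V, ω X Y = - ω Y X)
    (ρ : V →ₗ[ℝ] V) (s : ℝ) (hs : s = -1 ∨ s = 1)
    (hρ : ρ ∘ₗ ρ = (-s) • (LinearMap.id : V →ₗ[ℝ] V))
    (ε₂ ε₃ : ℝ) (hε₂ : ε₂ = -1 ∨ ε₂ = 1) (hε₃ : ε₃ = -1 ∨ ε₃ = 1)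
    (η : (V × Module.Dual ℝ V) → (V × Module.Dual ℝ V) → ℝ)
    (hη : ∀ x y : V × Module.Dual ℝ V, η x y = (x.2 y.1 + y.2 x.1) / 2)
    (Jρ Jα JΩ : (V × Module.Dual ℝ V) →ₗ[ℝ] (V × Module.Dual ℝ V))
    (hJρ : ∀ x : V × Module.Dual ℝ V, Jρ x = (ρ x.1, -(x.2 ∘ₗ ρ)))
    (hJα : ∀ x : V × Module.Dual ℝ V, Jα x = (α.symm x.2, ε₂ • α x.1))
    (hJΩ : ∀ x : V × Module.Dual ℝ V, JΩ x = (ω.symm x.2, ε₃ • ω x.1))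
    (hac₁ : Jρ ∘ₗ Jα + Jα ∘ₗ Jρ = 0)
    (hac₂ : Jρ ∘ₗ JΩ + JΩ ∘ₗ Jρ = 0)
    (hac₃ : Jα ∘ₗ JΩ + JΩ ∘ₗ Jα = 0)
    (a₁ a₂ a₃ k : ℝ) (hk : k = -s * a₁ ^ 2 + ε₂ * a₂ ^ 2 + ε₃ * a₃ ^ 2)
    (𝔸 : (V × Module.Dual ℝ V) →ₗ[ℝ] (V × Module.Dual ℝ V))
    (h𝔸 : 𝔸 = a₁ • Jρ + a₂ • Jα + a₃ • JΩ) :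
    (𝔸 ∘ₗ 𝔸 = k • (LinearMap.id : (V × Module.Dual ℝ V) →ₗ[ℝ] (V × Module.Dual ℝ V)) ∧
      ∀ x y, η (𝔸 x) (𝔸 y) = -k * η x y) ∧
    ((∃ γ₁ γ₂ : ℝ, (γ₁ = -1 ∨ γ₁ = 1) ∧ (γ₂ = -1 ∨ γ₂ = 1) ∧
        𝔸 ∘ₗ 𝔸 = γ₁ • (LinearMap.id : (V × Module.Dual ℝ V) →ₗ[ℝ] (V × Module.Dual ℝ V)) ∧
        ∀ x y, η (𝔸 x) (𝔸 y) = γ₂ * η x y) ↔ |k| = 1) := by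
  classical
  have hρ' : ∀ v : V, ρ (ρ v) = -s • v := by
    intro v
    have := LinearMap.ext_iff.mp hρ v
    simpa using this
  have h1 : Jρ ∘ₗ Jρ = (-s) • (LinearMap.id : (V × Module.Dual ℝ V) →ₗ[ℝ] (V × Module.Dual ℝ V)) := by
    refine LinearMap.ext fun x => ?_
    rw [LinearMap.comp_apply, hJρ, hJρ]
    refine Prod.ext ?_ (LinearMap.ext fun v => ?_)
    · simp [hρ']
    · simp [hρ']
  have h2 : Jα ∘ₗ Jα = ε₂ • (LinearMap.id : (V × Module.Dual ℝ V) →ₗ[ℝ] (V × Module.Dual ℝ V)) := by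
    refine LinearMap.ext fun x => ?_
    rw [LinearMap.comp_apply, hJα, hJα]
    refine Prod.ext ?_ (LinearMap.ext fun v => ?_)
    · simp
    · simp
  have h3 : JΩ ∘ₗ JΩ = ε₃ • (LinearMap.id : (V × Module.Dual ℝ V) →ₗ[ℝ] (V × Module.Dual ℝ V)) := by
    refine LinearMap.ext fun x => ?_
    rw [LinearMap.comp_apply, hJΩ, hJΩ]
    refine Prod.ext ?_ (LinearMap.ext fun v => ?_)
    · simp
    · simp
  have hc₁ : Jα ∘ₗ Jρ = -(Jρ ∘ₗ Jα) := (eq_neg_iff_add_eq_zero (a := Jα ∘ₗ Jρ) (b := Jρ ∘ₗ Jα)).mpr (by rw [add_comm]; exact hac₁)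
  have hc₂ : JΩ ∘ₗ Jρ = -(Jρ ∘ₗ JΩ) := (eq_neg_iff_add_eq_zero (a := JΩ ∘ₗ Jρ) (b := Jρ ∘ₗ JΩ)).mpr (by rw [add_comm]; exact hac₂)
  have hc₃ : JΩ ∘ₗ Jα = -(Jα ∘ₗ JΩ) := (eq_neg_iff_add_eq_zero (a := JΩ ∘ₗ Jα) (b := Jα ∘ₗ JΩ)).mpr (by rw [add_comm]; exact hac₃)
  -- the square of 𝔸
  have hsq : 𝔸 ∘ₗ 𝔸 = k • (LinearMap.id : (V × Module.Dual ℝ V) →ₗ[ℝ] (V × Module.Dual ℝ V)) := by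
    subst hk
    rw [h𝔸]
    simp only [LinearMap.add_comp, LinearMap.comp_add, LinearMap.smul_comp,
      LinearMap.comp_smul, h1, h2, h3, hc₁, hc₂, hc₃]
    module
  have hsq' : ∀ x, 𝔸 (𝔸 x) = k • x := by
    intro x
    have := LinearMap.ext_iff.mp hsq x
    simpa using this
  -- bilinearity facts for η
  have hηsmul₂ : ∀ (c : ℝ) (x y : V × Module.Dual ℝ V), η x (c • y) = c * η x y := by
    intro c x y
    simp [hη]
    ring
  -- each J is η-antiselfadjoint
  have haρ : ∀ x y : V × Module.Dual ℝ V, η (Jρ x) y = - η x (Jρ y) := by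
    intro x y
    simp [hη, hJρ]
    ring
  have hα' : ∀ ξ ζ : Module.Dual ℝ V, ζ (α.symm ξ) = - ξ (α.symm ζ) := by
    intro ξ ζ
    have := hα (α.symm ζ) (α.symm ξ)
    simpa using this
  have hω' : ∀ ξ ζ : Module.Dual ℝ V, ζ (ω.symm ξ) = - ξ (ω.symm ζ) := by
    intro ξ ζ
    have := hω (ω.symm ζ) (ω.symm ξ)
    simpa using this
  have haα : ∀ x y : V × Module.Dual ℝ V, η (Jα x) y = - η x (Jα y) := by
    intro x y
    simp only [hη, hJα, LinearMap.smul_apply, smul_eq_mul]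
    rw [hα x.1 y.1, hα' x.2 y.2]
    ring
  have haΩ : ∀ x y : V × Module.Dual ℝ V, η (JΩ x) y = - η x (JΩ y) := by
    intro x y
    simp only [hη, hJΩ, LinearMap.smul_apply, smul_eq_mul]
    rw [hω x.1 y.1, hω' x.2 y.2]
    ring
  -- η-additivity in the first slot
  have hηadd₁ : ∀ (u v y : V × Module.Dual ℝ V), η (u + v) y = η u y + η v y := by
    intro u v y
    simp [hη]
    ring
  have hηsmul₁ : ∀ (c : ℝ) (u y : V × Module.Dual ℝ V), η (c • u) y = c * η u y := by
    intro c u y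
    simp [hη]
    ring
  have ha𝔸 : ∀ x y : V × Module.Dual ℝ V, η (𝔸 x) y = - η x (𝔸 y) := by
    intro x y
    rw [h𝔸]
    simp only [LinearMap.add_apply, LinearMap.smul_apply, hηadd₁, hηsmul₁, haρ, haα, haΩ]
    have e₂ : η x (a₁ • Jρ y + a₂ • Jα y + a₃ • JΩ y)
        = a₁ * η x (Jρ y) + a₂ * η x (Jα y) + a₃ * η x (JΩ y) := by
      simp [hη]
      ring
    rw [e₂]
    ring
  have hmain₂ : ∀ x y, η (𝔸 x) (𝔸 y) = -k * η x y := by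
    intro x y
    rw [ha𝔸, hsq', hηsmul₂]
    ring
  refine ⟨⟨hsq, hmain₂⟩, ?_, ?_⟩
  · rintro ⟨γ₁, γ₂, hγ₁, hγ₂, heq, -⟩
    obtain ⟨v, hv⟩ := exists_ne (0 : V)
    have hx : (v, (0 : Module.Dual ℝ V)) ≠ 0 := by
      simp [Prod.ext_iff, hv]
    have := (LinearMap.ext_iff.mp (hsq.symm.trans heq)) (v, (0 : Module.Dual ℝ V))
    simp only [LinearMap.smul_apply, LinearMap.id_apply] at this
    have hkγ : k = γ₁ := smul_left_injective ℝ hx this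
    rcases hγ₁ with h | h <;> rw [hkγ, h] <;> norm_num
  · intro habs
    rcases abs_eq (by norm_num : (0:ℝ) ≤ 1) |>.mp habs with h | h
    · exact ⟨1, -1, Or.inr rfl, Or.inl rfl, by rw [← h]; exact hsq,
        fun x y => by norm_num [hmain₂, h]⟩
    · exact ⟨-1, 1, Or.inl rfl, Or.inr rfl, by rw [← h]; exact hsq,
        fun x y => by norm_num [hmain₂, h]⟩
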